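/- With the setup of the canonical path function ρ (tie-breaking via bottleneck edges and a linear order ≺ on edges): if G' is a subgraph of G and the path ρ_G(u,v) is entirely contained in G', then ρ_{G'}(u,v) = ρ_G(u,v). -/

import Mathlib

variable {V : Type*} [DecidableEq V]

/-- `p` is a walk from `u` to `v` using edges of `E` (given as a list of vertices). -/
def IsWalk (E : Finset (V × V)) (u v : V) (p : List V) : Prop :=
  p.head? = some u ∧ p.getLast? = some v ∧ p.Chain' (fun a b => (a, b) ∈ E)

/-- The edges of a path given as a list of vertices. -/
def pathEdges (p : List V) : List (V × V) := p.zip p.tail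

/-- Total weight of a path. -/
def wt (w : V × V → ℕ) (p : List V) : ℕ := ((pathEdges p).map w).sum

/-- `p` is a shortest walk from `u` to `v` in the graph with edge set `E` and weights `w`. -/
def IsShortest (E : Finset (V × V)) (w : V × V → ℕ) (u v : V) (p : List V) : Prop :=
  IsWalk E u v p ∧ ∀ q, IsWalk E u v q → wt w p ≤ wt w q

/-- `e` is the bottleneck (`≺`-smallest) edge of the path `p`. -/
def IsBottleneck [LinearOrder (V × V)] (p : List V) (e : V × V) : Prop :=
  e ∈ pathEdges p ∧ ∀ e' ∈ pathEdges p, e ≤ e'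

/-- `e = w_{G'}(u,v)`: the `≺`-largest edge that is the bottleneck edge of some
shortest `u → v` path. -/
def IsMaxBottleneck [LinearOrder (V × V)] (E : Finset (V × V)) (w : V × V → ℕ)
    (u v : V) (e : V × V) : Prop :=
  (∃ p, IsShortest E w u v p ∧ IsBottleneck p e) ∧
  ∀ e', (∃ p, IsShortest E w u v p ∧ IsBottleneck p e') → e' ≤ e

/-- `ρ` is the canonical shortest-path function: `ρ u u` is the trivial path, and
for `u ≠ v` (with `v` reachable from `u`), `ρ u v` is a shortest path obtained by
concatenating `ρ u u⋆`, the edge `w_{G'}(u,v) = (u⋆, v⋆)`, and `ρ v⋆ v`. -/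
def IsCanonical [LinearOrder (V × V)] (E : Finset (V × V)) (w : V × V → ℕ)
    (ρ : V → V → List V) : Prop :=
  (∀ u, ρ u u = [u]) ∧
  (∀ u v, u ≠ v → (∃ p, IsWalk E u v p) →
    IsShortest E w u v (ρ u v) ∧
    ∃ e, IsMaxBottleneck E w u v e ∧ ρ u v = ρ u e.1 ++ ρ e.2 v)

/-- Shortest-path distance in the graph `(E, w)`, `⊤` if unreachable. -/
noncomputable def gdist (E : Finset (V × V)) (w : V × V → ℕ) (u v : V) : ℕ∞ :=
  sInf {n : ℕ∞ | ∃ p, IsWalk E u v p ∧ (wt w p : ℕ∞) = n}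

/-- Remove a failed vertex or edge from the edge set. -/
def removeF (E : Finset (V × V)) (f : V ⊕ (V × V)) : Finset (V × V) :=
  match f with
  | Sum.inl x => E.filter (fun e => e.1 ≠ x ∧ e.2 ≠ x)
  | Sum.inr e0 => E.erase e0


section Helpers
set_option linter.unusedSectionVars false

variable {E E' : Finset (V × V)} {u v a b : V} {p q : List V} {w : V × V → ℕ}

lemma pathEdges_nil : pathEdges ([] : List V) = [] := rfl
lemma pathEdges_single (x : V) : pathEdges [x] = [] := rfl
lemma pathEdges_cons₂ (x y : V) (l : List V) :
    pathEdges (x :: y :: l) = (x, y) :: pathEdges (y :: l) := rfl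

lemma isWalk_ne_nil (h : IsWalk E u v p) : p ≠ [] := by
  rintro rfl; simp [IsWalk] at h

lemma isWalk_singleton (x : V) : IsWalk E x x [x] := by
  refine ⟨rfl, rfl, List.isChain_singleton _⟩

lemma pathEdges_ne_nil (h : IsWalk E u v p) (hne : u ≠ v) : pathEdges p ≠ [] := by
  obtain ⟨h1, h2, -⟩ := h
  match p with
  | [] => simp at h1
  | [x] =>
    simp at h1 h2
    exact absurd (h1.symm.trans h2) hne
  | x :: y :: t => simp [pathEdges_cons₂]

lemma pathEdges_subset {e : V × V} :
    ∀ {p : List V}, p.Chain' (fun a b => (a, b) ∈ E) → e ∈ pathEdges p → e ∈ E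
  | [], _, he => by simp [pathEdges] at he
  | [x], _, he => by simp [pathEdges] at he
  | x :: y :: t, hc, he => by
    rw [pathEdges_cons₂] at he
    rcases List.mem_cons.mp he with rfl | he
    · exact (List.isChain_cons_cons.mp hc).1
    · exact pathEdges_subset (List.isChain_cons_cons.mp hc).2 he

lemma mem_E_of_pathEdges (h : IsWalk E u v p) {e : V × V} (he : e ∈ pathEdges p) : e ∈ E :=
  pathEdges_subset h.2.2 he

lemma isWalk_mono (hsub : E' ⊆ E) (h : IsWalk E' u v p) : IsWalk E u v p :=
  ⟨h.1, h.2.1, h.2.2.imp fun _ _ hab => hsub hab⟩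

lemma isWalk_append (hp : IsWalk E u a p) (hq : IsWalk E b v q) (hab : (a, b) ∈ E) :
    IsWalk E u v (p ++ q) := by
  refine ⟨?_, ?_, ?_⟩
  · rw [List.head?_append, hp.1]; rfl
  · rw [List.getLast?_append, hq.2.1]; rfl
  · unfold List.Chain'; rw [List.isChain_append]
    refine ⟨hp.2.2, hq.2.2, ?_⟩
    intro x hx y hy
    rw [hp.2.1] at hx; rw [hq.1] at hy
    simp at hx hy
    subst hx; subst hy; exact hab

lemma pathEdges_append' : ∀ (p q : List V) (hp : p ≠ []) (hq : q ≠ []),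
    pathEdges (p ++ q) = pathEdges p ++ (p.getLast hp, q.head hq) :: pathEdges q
  | [x], q, _, hq => by
    match q with
    | c :: q' => simp [pathEdges_cons₂, pathEdges_single]
  | x :: y :: p', q, hp, hq => by
    have ih := pathEdges_append' (y :: p') q (by simp) hq
    have hcons : (x :: y :: p') ++ q = x :: ((y :: p') ++ q) := rfl
    rw [hcons]
    have : ((y :: p') ++ q) = y :: (p' ++ q) := rfl
    rw [this, pathEdges_cons₂, ← this, ih, pathEdges_cons₂]
    simp [List.getLast]

lemma pathEdges_walk_append (hp : IsWalk E u a p) (hq : IsWalk E b v q) :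
    pathEdges (p ++ q) = pathEdges p ++ (a, b) :: pathEdges q := by
  have hpne := isWalk_ne_nil hp
  have hqne := isWalk_ne_nil hq
  rw [pathEdges_append' p q hpne hqne]
  have h1 : p.getLast hpne = a := by
    have := hp.2.1; rw [List.getLast?_eq_getLast hpne] at this; exact Option.some_inj.mp this
  have h2 : q.head hqne = b := by
    have := hq.1; rw [List.head?_eq_head hqne] at this; exact Option.some_inj.mp this
  rw [h1, h2]

lemma wt_walk_append (hp : IsWalk E u a p) (hq : IsWalk E b v q) :
    wt w (p ++ q) = wt w p + w (a, b) + wt w q := by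
  rw [wt, pathEdges_walk_append hp hq]
  simp [wt]
  ring

lemma walk_split : ∀ (p : List V) {E : Finset (V × V)} {u v : V}, IsWalk E u v p →
    ∀ {e : V × V}, e ∈ pathEdges p →
    ∃ p1 p2, p = p1 ++ p2 ∧ IsWalk E u e.1 p1 ∧ IsWalk E e.2 v p2
  | [], E, u, v, hp, e, he => by simp [pathEdges] at he
  | [x], E, u, v, hp, e, he => by simp [pathEdges] at he
  | x :: y :: t, E, u, v, hp, e, he => by
    obtain ⟨h1, h2, h3⟩ := hp
    have hu : x = u := by simpa using h1
    rw [pathEdges_cons₂] at he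
    have hwyt : IsWalk E y v (y :: t) :=
      ⟨rfl, by simpa using h2, (List.isChain_cons_cons.mp h3).2⟩
    rcases List.mem_cons.mp he with rfl | he
    · refine ⟨[x], y :: t, rfl, ?_, hwyt⟩
      subst hu
      exact isWalk_singleton x
    · obtain ⟨q1, q2, hsplit, hq1, hq2⟩ := walk_split (y :: t) hwyt he
      refine ⟨x :: q1, q2, by rw [hsplit]; rfl, ?_, hq2⟩
      have hq1ne := isWalk_ne_nil hq1
      refine ⟨by simpa using hu, ?_, ?_⟩
      · rw [show (x :: q1).getLast? = q1.getLast? from ?_, hq1.2.1]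
        match q1, hq1ne with
        | c :: q1', _ => exact List.getLast?_cons_cons
      · unfold List.Chain'; rw [List.isChain_cons]
        refine ⟨?_, hq1.2.2⟩
        intro z hz
        rw [hq1.1] at hz
        have : y = z := by simpa using hz
        subst this
        exact (List.isChain_cons_cons.mp h3).1

lemma walk_restrict {P Q : List V} (hP : IsWalk E u a P) (hQ : IsWalk E b v Q)
    (h : IsWalk E' u v (P ++ Q)) : IsWalk E' u a P ∧ IsWalk E' b v Q := by
  have hch := h.2.2
  unfold List.Chain' at hch; rw [List.isChain_append] at hch
  exact ⟨⟨hP.1, hP.2.1, hch.1⟩, ⟨hQ.1, hQ.2.1, hch.2.1⟩⟩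

lemma exists_list_min {α : Type*} [LinearOrder α] :
    ∀ (l : List α), l ≠ [] → ∃ m ∈ l, ∀ x ∈ l, m ≤ x
  | [x], _ => ⟨x, by simp⟩
  | x :: y :: t, _ => by
    obtain ⟨m, hm, hle⟩ := exists_list_min (y :: t) (by simp)
    rcases le_total x m with h | h
    · refine ⟨x, by simp, ?_⟩
      intro z hz
      rcases List.mem_cons.mp hz with rfl | hz
      · exact le_refl z
      · exact h.trans (hle z hz)
    · refine ⟨m, by simp [List.mem_cons.mp hm], ?_⟩
      intro z hz
      rcases List.mem_cons.mp hz with rfl | hz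
      · exact h
      · exact hle z hz

/-- Splitting a shortest path at an edge gives shortest subpaths. -/
lemma shortest_split {p1 p2 : List V} (hsh : IsShortest E w u v (p1 ++ p2))
    (hp1 : IsWalk E u a p1) (hp2 : IsWalk E b v p2) (hab : (a, b) ∈ E) :
    IsShortest E w u a p1 ∧ IsShortest E w b v p2 := by
  have hwt : wt w (p1 ++ p2) = wt w p1 + w (a, b) + wt w p2 := wt_walk_append hp1 hp2
  constructor
  · refine ⟨hp1, fun q hq => ?_⟩
    have := hsh.2 (q ++ p2) (isWalk_append hq hp2 hab)
    rw [hwt, wt_walk_append hq hp2] at this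
    omega
  · refine ⟨hp2, fun q hq => ?_⟩
    have := hsh.2 (p1 ++ q) (isWalk_append hp1 hq hab)
    rw [hwt, wt_walk_append hp1 hq] at this
    omega

/-- The walk `ρ x y` exists whenever some walk from `x` to `y` exists. -/
lemma canonical_walk [LinearOrder (V × V)] {ρ : V → V → List V}
    (h1 : IsCanonical E w ρ) (hex : ∃ p, IsWalk E u v p) : IsWalk E u v (ρ u v) := by
  by_cases huv : u = v
  · subst huv; rw [h1.1 u]; exact isWalk_singleton u
  · exact (h1.2 u v huv hex).1.1

/-- Key lemma: the max-bottleneck edge is the bottleneck of the canonical path. -/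
lemma canonical_bottleneck [LinearOrder (V × V)] {w : V × V → ℕ}
    (hw : ∀ e ∈ E, 1 ≤ w e) {ρ : V → V → List V} (h1 : IsCanonical E w ρ) :
    ∀ n u v, wt w (ρ u v) ≤ n → u ≠ v → (∃ p, IsWalk E u v p) →
      ∀ e, IsMaxBottleneck E w u v e → IsBottleneck (ρ u v) e := by
  intro n
  induction n using Nat.strong_induction_on with
  | _ n ih =>
    intro u v hn hne hex e hmb
    obtain ⟨hshort, f, hmbf, hdecomp⟩ := h1.2 u v hne hex
    have hfe : f = e := le_antisymm (hmb.2 f hmbf.1) (hmbf.2 e hmb.1)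
    subst hfe
    obtain ⟨a, b⟩ := f
    -- the witness path for the max bottleneck
    obtain ⟨p, hpsh, hpbot⟩ := hmb.1
    obtain ⟨p1, p2, rfl, hp1, hp2⟩ := walk_split p hpsh.1 hpbot.1
    have habE : (a, b) ∈ E := mem_E_of_pathEdges hpsh.1 hpbot.1
    obtain ⟨hp1sh, hp2sh⟩ := shortest_split hpsh hp1 hp2 habE
    -- walks ρ u a and ρ b v
    have hwa : IsWalk E u a (ρ u a) := canonical_walk h1 ⟨p1, hp1⟩
    have hwb : IsWalk E b v (ρ b v) := canonical_walk h1 ⟨p2, hp2⟩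
    have hpe : pathEdges (ρ u v) = pathEdges (ρ u a) ++ (a, b) :: pathEdges (ρ b v) := by
      rw [hdecomp]; exact pathEdges_walk_append hwa hwb
    have hwt : wt w (ρ u v) = wt w (ρ u a) + w (a, b) + wt w (ρ b v) := by
      rw [hdecomp]; exact wt_walk_append hwa hwb
    have hwab : 1 ≤ w (a, b) := hw _ habE
    constructor
    · rw [hpe]; simp
    · intro e' he'
      rw [hpe] at he'
      rcases List.mem_append.mp he' with he' | he'
      · -- e' on ρ u a
        by_cases hua : u = a
        · subst hua; rw [h1.1 u] at he'; simp [pathEdges_single] at he'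
        · obtain ⟨-, eua, hmbua, -⟩ := h1.2 u a hua ⟨p1, hp1⟩
          have hbot : IsBottleneck (ρ u a) eua := by
            refine ih (wt w (ρ u a)) (by omega) u a le_rfl hua ⟨p1, hp1⟩ eua hmbua
          -- the bottleneck of p1 is ≥ (a,b), and it is ≤ eua
          have hp1ne : pathEdges p1 ≠ [] := pathEdges_ne_nil hp1 hua
          obtain ⟨m, hm, hmle⟩ := exists_list_min (pathEdges p1) hp1ne
          have h1m : (a, b) ≤ m := by
            refine hpbot.2 m ?_
            rw [pathEdges_walk_append hp1 hp2]
            exact List.mem_append.mpr (Or.inl hm)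
          have h2m : m ≤ eua := hmbua.2 m ⟨p1, hp1sh, hm, hmle⟩
          exact le_trans (le_trans h1m h2m) (hbot.2 e' he')
      · rcases List.mem_cons.mp he' with rfl | he'
        · exact le_refl _
        · -- e' on ρ b v
          by_cases hbv : b = v
          · subst hbv; rw [h1.1 b] at he'; simp [pathEdges_single] at he'
          · obtain ⟨-, ebv, hmbbv, -⟩ := h1.2 b v hbv ⟨p2, hp2⟩
            have hbot : IsBottleneck (ρ b v) ebv := by
              refine ih (wt w (ρ b v)) (by omega) b v le_rfl hbv ⟨p2, hp2⟩ ebv hmbbv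
            have hp2ne : pathEdges p2 ≠ [] := pathEdges_ne_nil hp2 hbv
            obtain ⟨m, hm, hmle⟩ := exists_list_min (pathEdges p2) hp2ne
            have h1m : (a, b) ≤ m := by
              refine hpbot.2 m ?_
              rw [pathEdges_walk_append hp1 hp2]
              exact List.mem_append.mpr (Or.inr (List.mem_cons.mpr (Or.inr hm)))
            have h2m : m ≤ ebv := hmbbv.2 m ⟨p2, hp2sh, hm, hmle⟩
            exact le_trans (le_trans h1m h2m) (hbot.2 e' he')

end Helpers

lemma stmt9_aux [LinearOrder (V × V)] (E E' : Finset (V × V)) (hsub : E' ⊆ E)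
    (w : V × V → ℕ) (hw : ∀ e ∈ E, 1 ≤ w e)
    (ρ ρ' : V → V → List V) (h1 : IsCanonical E w ρ) (h2 : IsCanonical E' w ρ') :
    ∀ n u v, wt w (ρ u v) ≤ n → IsWalk E' u v (ρ u v) → ρ' u v = ρ u v := by
  intro n
  induction n using Nat.strong_induction_on with
  | _ n ih =>
    intro u v hn hin
    by_cases hne : u = v
    · subst hne; rw [h1.1, h2.1]
    · have hexE' : ∃ p, IsWalk E' u v p := ⟨_, hin⟩
      have hinE : IsWalk E u v (ρ u v) := isWalk_mono hsub hin
      have hexE : ∃ p, IsWalk E u v p := ⟨_, hinE⟩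
      obtain ⟨hshE, e, hmbE, hdecE⟩ := h1.2 u v hne hexE
      obtain ⟨hshE', e', hmbE', hdecE'⟩ := h2.2 u v hne hexE'
      have hshρE' : IsShortest E' w u v (ρ u v) :=
        ⟨hin, fun q hq => hshE.2 q (isWalk_mono hsub hq)⟩
      have hbot : IsBottleneck (ρ u v) e :=
        canonical_bottleneck hw h1 (wt w (ρ u v)) u v le_rfl hne hexE e hmbE
      have hle1 : e ≤ e' := hmbE'.2 e ⟨ρ u v, hshρE', hbot⟩
      have hle2 : e' ≤ e := by
        apply hmbE.2 e'
        obtain ⟨p', hp'sh, hp'bot⟩ := hmbE'.1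
        refine ⟨p', ⟨isWalk_mono hsub hp'sh.1, fun q hq => ?_⟩, hp'bot⟩
        have a1 : wt w p' ≤ wt w (ρ u v) := hp'sh.2 _ hin
        have a2 : wt w (ρ u v) ≤ wt w q := hshE.2 q hq
        omega
      have hee : e = e' := le_antisymm hle1 hle2
      subst hee
      obtain ⟨a, b⟩ := e
      have habE : (a, b) ∈ E := mem_E_of_pathEdges hinE hbot.1
      obtain ⟨q1, q2, -, hq1, hq2⟩ := walk_split (ρ u v) hinE hbot.1
      have hwa : IsWalk E u a (ρ u a) := canonical_walk h1 ⟨q1, hq1⟩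
      have hwb : IsWalk E b v (ρ b v) := canonical_walk h1 ⟨q2, hq2⟩
      obtain ⟨hwa', hwb'⟩ := walk_restrict hwa hwb (hdecE ▸ hin)
      have hwt : wt w (ρ u v) = wt w (ρ u a) + w (a, b) + wt w (ρ b v) := by
        rw [hdecE]; exact wt_walk_append hwa hwb
      have hwab : 1 ≤ w (a, b) := hw _ habE
      have iha : ρ' u a = ρ u a := ih (wt w (ρ u a)) (by omega) u a le_rfl hwa'
      have ihb : ρ' b v = ρ b v := ih (wt w (ρ b v)) (by omega) b v le_rfl hwb'
      rw [hdecE', hdecE, iha, ihb]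

theorem stmt9 [LinearOrder (V × V)] (E E' : Finset (V × V)) (hsub : E' ⊆ E)
    (w : V × V → ℕ) (hw : ∀ e ∈ E, 1 ≤ w e)
    (ρ ρ' : V → V → List V) (h1 : IsCanonical E w ρ) (h2 : IsCanonical E' w ρ')
    (u v : V) (hin : IsWalk E' u v (ρ u v)) :
    ρ' u v = ρ u v :=
  stmt9_aux E E' hsub w hw ρ ρ' h1 h2 (wt w (ρ u v)) u v le_rfl hin
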